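/- Flipping condition (critical step): in the discrete auto rate-tuning model, suppose R(i) > 1 at time step i. Then R(i+1) = 1 if and only if λ(i) = κ(i); moreover, if λ(i) = κ(i) then R(j) = 1 for all j ≥ i+1. -/
import Mathlib


/-- Flipping condition (critical step): if `R i > 1`, then `R (i+1) = 1` iff
`λ i = κ i`; moreover in that case the ratio stays at 1 forever. -/
theorem elr_ratio_critical_step
    (cl ck : ℝ) (hcl : 0 < cl) (hck : 0 < ck)
    (lam : ℕ → ℝ) (hlam : ∀ i, 0 < lam i)
    (sl sk : ℕ → ℝ) (hsl0 : 0 < sl 0) (hsk0 : 0 < sk 0)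
    (hsl : ∀ i, sl (i + 1) = sl i + (lam i) ^ 2 * cl ^ 2 / sl i)
    (hsk : ∀ i, sk (i + 1) = sk i + (lam i) ^ 2 * ck ^ 2 / sk i)
    (R : ℕ → ℝ) (hR : ∀ i, R i = cl * sk i / (ck * sl i))
    (kap : ℕ → ℝ)
    (hkap : ∀ i, kap i = Real.sqrt (sl i) * Real.sqrt (sk i) / Real.sqrt (cl * ck))
    (i : ℕ) (hRi : 1 < R i) :
    (R (i + 1) = 1 ↔ lam i = kap i) ∧
      (lam i = kap i → ∀ j, i + 1 ≤ j → R j = 1) := by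
  have hpos : ∀ n, 0 < sl n ∧ 0 < sk n := by
    intro n
    induction n with
    | zero => exact ⟨hsl0, hsk0⟩
    | succ n ih =>
      obtain ⟨h1, h2⟩ := ih
      refine ⟨?_, ?_⟩
      · rw [hsl]; positivity
      · rw [hsk]; positivity
  have hR1 : ∀ n, (R n = 1 ↔ cl * sk n = ck * sl n) := by
    intro n
    rw [hR, div_eq_one_iff_eq (by have := (hpos n).1; positivity)]
  -- κ i squared
  have hki : kap i ^ 2 = sl i * sk i / (cl * ck) := by
    rw [hkap]
    have h1 := (hpos i).1
    have h2 := (hpos i).2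
    rw [div_pow, mul_pow, Real.sq_sqrt h1.le, Real.sq_sqrt h2.le,
      Real.sq_sqrt (by positivity : (0:ℝ) ≤ cl * ck)]
  have hkpos : 0 < kap i := by
    have h1 := (hpos i).1
    have h2 := (hpos i).2
    rw [hkap]; positivity
  have hgt : ck * sl i < cl * sk i := by
    rw [hR i] at hRi
    have h1 := (hpos i).1
    exact (one_lt_div (by positivity)).mp hRi
  have h1 := (hpos i).1
  have h2 := (hpos i).2
  have hlami := hlam i
  -- key identity
  have hkey : cl * sk (i+1) - ck * sl (i+1)
      = (cl * sk i - ck * sl i) * (sl i * sk i - lam i ^ 2 * cl * ck)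
        / (sl i * sk i) := by
    rw [hsl, hsk]
    field_simp
    ring
  have hiff : R (i+1) = 1 ↔ lam i = kap i := by
    rw [hR1, ← sub_eq_zero, hkey, div_eq_zero_iff]
    constructor
    · rintro (h | h)
      · rcases mul_eq_zero.mp h with h | h
        · exact absurd h (by nlinarith)
        · have hl2 : lam i ^ 2 = kap i ^ 2 := by
            rw [hki]; field_simp; nlinarith
          nlinarith [hlam i, hkpos]
      · exact absurd h (by positivity)
    · intro h
      left
      have : lam i ^ 2 = sl i * sk i / (cl * ck) := by rw [h, hki]
      rw [this]
      field_simp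
      ring
  refine ⟨hiff, ?_⟩
  intro h j hj
  have hstep : ∀ n, cl * sk n = ck * sl n → cl * sk (n+1) = ck * sl (n+1) := by
    intro n hn
    have hn1 := (hpos n).1
    have hn2 := (hpos n).2
    rw [hsl, hsk]
    field_simp
    linear_combination (sl n * sk n - lam n ^ 2 * cl * ck) * hn
  have base : R (i+1) = 1 := hiff.mpr h
  induction j with
  | zero => omega
  | succ j ih =>
    rcases Nat.lt_or_ge i j with hij | hij
    · have hj' : R j = 1 := ih (by omega)
      rw [hR1] at hj' ⊢
      exact hstep j hj'
    · have : j = i := by omega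
      rw [this]
      exact base
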